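/- Let u ∈ ℝ^E be a nonzero vector with Au = 0. Then u can be written as a finite sum u = Σ_i λ_i·C_i where each λ_i > 0, each C_i is a signed circuit of A whose support is contained in the support of u, and for every e in the support of C_i the sign of C_i(e) agrees with the sign of u(e). -/

import Mathlib

open Matrix

/-- A signed circuit of a real matrix `A`: a nonzero vector in `ker A` whose support is
minimal with respect to inclusion among supports of nonzero kernel vectors. -/
def IsCircuitR {r m : ℕ} (A : Matrix (Fin r) (Fin m) ℝ) (C : Fin m → ℝ) : Prop :=
  C ≠ 0 ∧ A.mulVec C = 0 ∧
    ∀ v : Fin m → ℝ, v ≠ 0 → A.mulVec v = 0 →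
      {e | v e ≠ 0} ⊆ {e | C e ≠ 0} → {e | v e ≠ 0} = {e | C e ≠ 0}

private lemma sign_trans' {a b c : ℝ} (h1 : 0 < a * b) (h2 : 0 < b * c) : 0 < a * c := by
  rcases mul_pos_iff.mp h1 with ⟨ha, hb⟩ | ⟨ha, hb⟩ <;>
    rcases mul_pos_iff.mp h2 with ⟨hb', hc⟩ | ⟨hb', hc⟩ <;>
    first
      | exact mul_pos ha hc
      | exact mul_pos_of_neg_of_neg ha hc
      | linarith

private lemma sign_eq_of_mul_pos {x y : ℝ} (h : 0 < x * y) :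
    Real.sign y = Real.sign x := by
  rcases mul_pos_iff.mp h with ⟨hx, hy⟩ | ⟨hx, hy⟩
  · rw [Real.sign_of_pos hx, Real.sign_of_pos hy]
  · rw [Real.sign_of_neg hx, Real.sign_of_neg hy]

/-- The pivot step: subtract a suitable positive multiple of `w` from `u` so that a
coordinate in the support of `w` gets killed, while all remaining coordinates keep the
sign of `u`. -/
private lemma pivot {m : ℕ} (u w : Fin m → ℝ) (hsupp : ∀ e, w e ≠ 0 → u e ≠ 0)
    (e0 : Fin m) (h0 : 0 < u e0 * w e0) :
    ∃ t : ℝ, 0 < t ∧ ∃ e1 : Fin m, u e1 ≠ 0 ∧ u e1 - t * w e1 = 0 ∧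
      ∀ e, u e - t * w e ≠ 0 → 0 < u e * (u e - t * w e) := by
  classical
  set S : Finset (Fin m) := Finset.univ.filter (fun e => 0 < u e * w e) with hS
  have hS0 : e0 ∈ S := by simp [hS, h0]
  obtain ⟨e1, he1, hmin⟩ := S.exists_min_image (fun e => u e / w e) ⟨e0, hS0⟩
  have he1' : 0 < u e1 * w e1 := by simpa [hS] using he1
  have hw1 : w e1 ≠ 0 := by
    intro h; rw [h, mul_zero] at he1'; exact lt_irrefl _ he1'
  have hu1 : u e1 ≠ 0 := by
    intro h; rw [h, zero_mul] at he1'; exact lt_irrefl _ he1'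
  have htpos : 0 < u e1 / w e1 := by
    rcases mul_pos_iff.mp he1' with ⟨ha, hb⟩ | ⟨ha, hb⟩
    · exact div_pos ha hb
    · exact div_pos_of_neg_of_neg ha hb
  refine ⟨u e1 / w e1, htpos, e1, hu1, ?_, ?_⟩
  · field_simp; ring
  · intro e he
    set t : ℝ := u e1 / w e1 with ht
    by_cases hwe : w e = 0
    · have heq : u e - t * w e = u e := by rw [hwe, mul_zero, sub_zero]
      have hue : u e ≠ 0 := by intro h; apply he; rw [heq, h]
      rw [heq]
      exact mul_self_pos.mpr hue
    · have hue : u e ≠ 0 := hsupp e hwe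
      by_cases hin : 0 < u e * w e
      · -- e ∈ S, so t ≤ u e / w e
        have hmem : e ∈ S := by simp [hS, hin]
        have hle : t ≤ u e / w e := hmin e hmem
        have hcanc : (u e / w e) * w e = u e := div_mul_cancel₀ (u e) hwe
        rcases mul_pos_iff.mp hin with ⟨hup, hwp⟩ | ⟨hun, hwn⟩
        · have h1 : t * w e ≤ u e := by
            have := mul_le_mul_of_nonneg_right hle hwp.le
            rwa [hcanc] at this
          have hge : 0 ≤ u e - t * w e := by linarith
          have hpos : 0 < u e - t * w e := lt_of_le_of_ne hge (Ne.symm he)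
          exact mul_pos hup hpos
        · have h1 : u e ≤ t * w e := by
            have := mul_le_mul_of_nonpos_right hle hwn.le
            rwa [hcanc] at this
          have hle' : u e - t * w e ≤ 0 := by linarith
          have hneg : u e - t * w e < 0 := lt_of_le_of_ne hle' he
          exact mul_pos_of_neg_of_neg hun hneg
      · -- opposite signs: u e * w e < 0
        have hlt : u e * w e < 0 := by
          rcases lt_trichotomy (u e * w e) 0 with h | h | h
          · exact h
          · exact absurd (mul_eq_zero.mp h) (by push_neg; exact ⟨hue, hwe⟩)
          · exact absurd h hin
        nlinarith [mul_self_pos.mpr hue]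

private lemma exists_conformal_circuit {r m : ℕ} (A : Matrix (Fin r) (Fin m) ℝ) :
    ∀ n : ℕ, ∀ u : Fin m → ℝ,
      (Finset.univ.filter (fun e => u e ≠ 0)).card ≤ n → u ≠ 0 → A.mulVec u = 0 →
      ∃ C : Fin m → ℝ, IsCircuitR A C ∧ ∀ e, C e ≠ 0 → 0 < u e * C e := by
  classical
  intro n
  induction n with
  | zero =>
    intro u hcard hu _
    exfalso
    apply hu
    funext e
    have : u e = 0 := by
      by_contra h
      have : e ∈ Finset.univ.filter (fun e => u e ≠ 0) := by simp [h]
      have := Finset.card_pos.mpr ⟨e, this⟩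
      omega
    exact this
  | succ n ih =>
    intro u hcard hu hker
    by_cases hC : IsCircuitR A u
    · exact ⟨u, hC, fun e h => mul_self_pos.mpr h⟩
    · -- u is not a circuit: find a kernel vector with strictly smaller support
      have : ∃ w : Fin m → ℝ, w ≠ 0 ∧ A.mulVec w = 0 ∧
          {e | w e ≠ 0} ⊆ {e | u e ≠ 0} ∧ {e | w e ≠ 0} ≠ {e | u e ≠ 0} := by
        by_contra h
        push_neg at h
        exact hC ⟨hu, hker, fun v hv hkv hsub => by
          by_contra hne
          exact hne (h v hv hkv hsub)⟩
      obtain ⟨w, hw0, hwker, hwsub, hwne⟩ := this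
      obtain ⟨e0, he0⟩ := Function.ne_iff.mp hw0
      have he0' : w e0 ≠ 0 := by simpa using he0
      have hue0 : u e0 ≠ 0 := hwsub he0'
      -- choose w or -w so the signs agree at e0
      have hprod : u e0 * w e0 ≠ 0 := mul_ne_zero hue0 he0'
      obtain ⟨w', hw'ker, hw'sub, hw'ne, h0⟩ :
          ∃ w' : Fin m → ℝ, A.mulVec w' = 0 ∧ {e | w' e ≠ 0} ⊆ {e | u e ≠ 0} ∧
            {e | w' e ≠ 0} ≠ {e | u e ≠ 0} ∧ 0 < u e0 * w' e0 := by
        rcases hprod.lt_or_gt with h | h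
        · refine ⟨-w, by simp [Matrix.mulVec_neg, hwker], ?_, ?_, ?_⟩
          · intro e he; exact hwsub (by simpa using he)
          · have : {e | (-w) e ≠ 0} = {e | w e ≠ 0} := by ext e; simp
            rw [this]; exact hwne
          · simp only [Pi.neg_apply, mul_neg]; linarith
        · exact ⟨w, hwker, hwsub, hwne, h⟩
      obtain ⟨t, htpos, e1, hu1ne, he1zero, hconf⟩ :=
        pivot u w' (fun e he => hw'sub he) e0 h0
      set u1 : Fin m → ℝ := u - t • w' with hu1def
      have hu1app : ∀ e, u1 e = u e - t * w' e := by
        intro e; simp [hu1def, smul_eq_mul]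
      -- u1 is nonzero: there is a coordinate in supp u \ supp w'
      have hexists : ∃ e2, u e2 ≠ 0 ∧ w' e2 = 0 := by
        by_contra h
        push_neg at h
        apply hw'ne
        apply Set.Subset.antisymm hw'sub
        intro e he
        by_contra hwe
        exact (h e he) (by simpa using hwe)
      obtain ⟨e2, hue2, hwe2⟩ := hexists
      have hu1ne0 : u1 ≠ 0 := by
        intro h
        apply hue2
        have := congrFun h e2
        rw [hu1app] at this
        simpa [hwe2] using this
      have hu1ker : A.mulVec u1 = 0 := by
        rw [hu1def, Matrix.mulVec_sub, Matrix.mulVec_smul, hker, hw'ker]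
        simp
      -- support of u1 strictly smaller
      have hsub1 : (Finset.univ.filter (fun e => u1 e ≠ 0)) ⊆
          Finset.univ.filter (fun e => u e ≠ 0) := by
        intro e he
        simp only [Finset.mem_filter, Finset.mem_univ, true_and] at he ⊢
        intro h
        have := hconf e (by rwa [← hu1app])
        rw [h] at this
        simp at this
      have hne1 : e1 ∈ Finset.univ.filter (fun e => u e ≠ 0) := by simp [hu1ne]
      have hnotin : e1 ∉ Finset.univ.filter (fun e => u1 e ≠ 0) := by
        simp [hu1app, he1zero]
      have hcard1 : (Finset.univ.filter (fun e => u1 e ≠ 0)).card ≤ n := by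
        have : (Finset.univ.filter (fun e => u1 e ≠ 0)).card <
            (Finset.univ.filter (fun e => u e ≠ 0)).card :=
          Finset.card_lt_card ⟨hsub1, fun h => hnotin (h hne1)⟩
        omega
      obtain ⟨C, hCcirc, hCconf⟩ := ih u1 hcard1 hu1ne0 hu1ker
      refine ⟨C, hCcirc, fun e he => ?_⟩
      have h2 : 0 < u1 e * C e := hCconf e he
      have hu1e : u1 e ≠ 0 := by
        intro h; rw [h, zero_mul] at h2; exact lt_irrefl _ h2
      have h1 : 0 < u e * u1 e := by
        have := hconf e (by rwa [hu1app] at hu1e)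
        rwa [← hu1app] at this
      exact sign_trans' h1 h2

private lemma decomp_aux {r m : ℕ} (A : Matrix (Fin r) (Fin m) ℝ) :
    ∀ n : ℕ, ∀ u : Fin m → ℝ,
      (Finset.univ.filter (fun e => u e ≠ 0)).card ≤ n → u ≠ 0 → A.mulVec u = 0 →
      ∃ (k : ℕ) (lam : Fin k → ℝ) (C : Fin k → (Fin m → ℝ)),
        (∀ i, 0 < lam i) ∧ (∀ i, IsCircuitR A (C i)) ∧
        (∀ i e, C i e ≠ 0 → 0 < u e * C i e) ∧
        u = ∑ i, lam i • C i := by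
  classical
  intro n
  induction n with
  | zero =>
    intro u hcard hu _
    exfalso
    apply hu
    funext e
    have : u e = 0 := by
      by_contra h
      have : e ∈ Finset.univ.filter (fun e => u e ≠ 0) := by simp [h]
      have := Finset.card_pos.mpr ⟨e, this⟩
      omega
    exact this
  | succ n ih =>
    intro u hcard hu hker
    obtain ⟨C, hCcirc, hCconf⟩ :=
      exists_conformal_circuit A (n + 1) u hcard hu hker
    have hC0 := hCcirc.1
    have hCker := hCcirc.2.1
    obtain ⟨e0, he0⟩ := Function.ne_iff.mp hC0
    have he0' : C e0 ≠ 0 := by simpa using he0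
    have h0 : 0 < u e0 * C e0 := hCconf e0 he0'
    have hsupp : ∀ e, C e ≠ 0 → u e ≠ 0 := by
      intro e he
      have := hCconf e he
      intro h; rw [h, zero_mul] at this; exact lt_irrefl _ this
    obtain ⟨t, htpos, e1, hu1ne, he1zero, hconf⟩ := pivot u C hsupp e0 h0
    set u1 : Fin m → ℝ := u - t • C with hu1def
    have hu1app : ∀ e, u1 e = u e - t * C e := by
      intro e; simp [hu1def, smul_eq_mul]
    have hu1ker : A.mulVec u1 = 0 := by
      rw [hu1def, Matrix.mulVec_sub, Matrix.mulVec_smul, hker, hCker]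
      simp
    have hrepr : u = t • C + u1 := by
      rw [hu1def]; abel
    by_cases h1 : u1 = 0
    · refine ⟨1, fun _ => t, fun _ => C, fun _ => htpos, fun _ => hCcirc,
        fun _ e he => hCconf e he, ?_⟩
      rw [hrepr, h1, add_zero]
      simp
    · -- induction on u1
      have hsub1 : (Finset.univ.filter (fun e => u1 e ≠ 0)) ⊆
          Finset.univ.filter (fun e => u e ≠ 0) := by
        intro e he
        simp only [Finset.mem_filter, Finset.mem_univ, true_and] at he ⊢
        intro h
        have := hconf e (by rwa [← hu1app])
        rw [h] at this
        simp at this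
      have hne1 : e1 ∈ Finset.univ.filter (fun e => u e ≠ 0) := by simp [hu1ne]
      have hnotin : e1 ∉ Finset.univ.filter (fun e => u1 e ≠ 0) := by
        simp [hu1app, he1zero]
      have hcard1 : (Finset.univ.filter (fun e => u1 e ≠ 0)).card ≤ n := by
        have : (Finset.univ.filter (fun e => u1 e ≠ 0)).card <
            (Finset.univ.filter (fun e => u e ≠ 0)).card :=
          Finset.card_lt_card ⟨hsub1, fun h => hnotin (h hne1)⟩
        omega
      obtain ⟨k, lam, Cs, hlam, hcirc, hconf2, hsum⟩ := ih u1 hcard1 h1 hu1ker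
      refine ⟨k + 1, Fin.cons t lam, Fin.cons C Cs, ?_, ?_, ?_, ?_⟩
      · intro i
        refine Fin.cases ?_ ?_ i
        · simpa using htpos
        · intro j; simpa using hlam j
      · intro i
        refine Fin.cases ?_ ?_ i
        · simpa using hCcirc
        · intro j; simpa using hcirc j
      · intro i
        refine Fin.cases ?_ ?_ i
        · intro e he
          exact hCconf e (by simpa using he)
        · intro j e he
          have h2 : 0 < u1 e * Cs j e := hconf2 j e (by simpa using he)
          have hu1e : u1 e ≠ 0 := by
            intro h; rw [h, zero_mul] at h2; exact lt_irrefl _ h2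
          have hA : 0 < u e * u1 e := by
            have := hconf e (by rwa [hu1app] at hu1e)
            rwa [← hu1app] at this
          simpa using sign_trans' hA h2
      · rw [Fin.sum_univ_succ]
        simp only [Fin.cons_zero, Fin.cons_succ]
        rw [hrepr, hsum]

/-- Circuit decomposition: a nonzero kernel vector of `A` is a positive combination of
signed circuits conformal to it. -/
theorem stmt14 {r m : ℕ} (A : Matrix (Fin r) (Fin m) ℝ)
    (u : Fin m → ℝ) (hu : u ≠ 0) (hker : A.mulVec u = 0) :
    ∃ (k : ℕ) (lam : Fin k → ℝ) (C : Fin k → (Fin m → ℝ)),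
      (∀ i, 0 < lam i) ∧ (∀ i, IsCircuitR A (C i)) ∧
      (∀ i e, C i e ≠ 0 → u e ≠ 0 ∧ Real.sign (C i e) = Real.sign (u e)) ∧
      u = ∑ i, lam i • C i := by
  classical
  obtain ⟨k, lam, C, hlam, hcirc, hconf, hsum⟩ :=
    decomp_aux A (Finset.univ.filter (fun e => u e ≠ 0)).card u le_rfl hu hker
  refine ⟨k, lam, C, hlam, hcirc, fun i e he => ?_, hsum⟩
  have h := hconf i e he
  constructor
  · intro h0; rw [h0, zero_mul] at h; exact lt_irrefl _ h
  · exact sign_eq_of_mul_pos h
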